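/- Let Ω ⊂ ℝ^k be open with Lebesgue measure μ, let ψ be a strictly increasing Young function satisfying condition Δ2 globally with lim_{t→0+} ψ(t)/t = 0 and lim_{t→∞} t/ψ(t) = 0, and let τ(t)=1/ψ(1/t) for t>0, τ(0)=0. Then for every measurable set E ⊂ Ω with μ(E) < ∞ there exists a constant C(E) < ∞ such that ∫_E f dμ ≤ C(E) · ∫₀^∞ τ⁻¹(μ_f(s)) ds for every nonnegative measurable function f on Ω. -/

import Mathlib

open MeasureTheory Filter Topology Set
open scoped ENNReal

/-- A (finite-valued) Young function: non-decreasing, left-continuous and convex on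
`[0, ∞)`, with `ψ 0 = 0 = lim_{t→0+} ψ t` and `lim_{t→∞} ψ t = ∞`. -/
def IsYoung (ψ : ℝ → ℝ) : Prop :=
  MonotoneOn ψ (Set.Ici 0) ∧
  ConvexOn ℝ (Set.Ici 0) ψ ∧
  (∀ t : ℝ, 0 < t → Tendsto ψ (𝓝[<] t) (𝓝 (ψ t))) ∧
  ψ 0 = 0 ∧ Tendsto ψ (𝓝[>] 0) (𝓝 0) ∧
  Tendsto ψ atTop atTop

/-- The Young function `ψ` satisfies condition `Δ₂` globally. -/
def Delta2 (ψ : ℝ → ℝ) : Prop :=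
  ∃ d : ℝ, 1 < d ∧ ∀ t : ℝ, 0 < t → ψ (2 * t) ≤ d * ψ t

/-- The distribution function `μ_f(s) = μ {x ∈ Ω : f x > s}` of a nonnegative
function `f` on `Ω`. -/
noncomputable def distribFn₀ {k : ℕ} (Ω : Set (EuclideanSpace ℝ (Fin k)))
    (f : EuclideanSpace ℝ (Fin k) → ℝ) (s : ℝ) : ℝ≥0∞ :=
  volume {x | x ∈ Ω ∧ s < f x}

/-- The `[0, ∞]`-valued extension of `σ = τ⁻¹ : [0, ∞) → [0, ∞)`. -/
noncomputable def extInv (σ : ℝ → ℝ) : ℝ≥0∞ → ℝ≥0∞ :=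
  fun a => if a = ∞ then ∞ else ENNReal.ofReal (σ a.toReal)

/-- The functional `ρ(f) = ∫₀^∞ τ⁻¹(μ_f(s)) ds` on nonnegative measurable functions
on `Ω`, where `σ = τ⁻¹`. -/
noncomputable def rhoFn {k : ℕ} (Ω : Set (EuclideanSpace ℝ (Fin k))) (σ : ℝ → ℝ)
    (f : EuclideanSpace ℝ (Fin k) → ℝ) : ℝ≥0∞ :=
  ∫⁻ s in Set.Ioi (0 : ℝ), extInv σ (distribFn₀ Ω f s)

/-- For every measurable `E ⊆ Ω` of finite measure there is a constant
`C(E) < ∞` such that `∫_E f dμ ≤ C(E) · ρ(f)` for every nonnegative measurable `f`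
on `Ω`, where `ρ(f) = ∫₀^∞ τ⁻¹(μ_f(s)) ds`. -/
theorem stmt14 {k : ℕ}
    (Ω : Set (EuclideanSpace ℝ (Fin k))) (hΩ : IsOpen Ω)
    (ψ : ℝ → ℝ) (hY : IsYoung ψ) (hsm : StrictMonoOn ψ (Set.Ici 0)) (hΔ : Delta2 ψ)
    (h0 : Tendsto (fun t => ψ t / t) (𝓝[>] 0) (𝓝 0))
    (htop : Tendsto (fun t => t / ψ t) atTop (𝓝 0))
    (τ : ℝ → ℝ) (hτ0 : τ 0 = 0) (hτ : ∀ t : ℝ, 0 < t → τ t = 1 / ψ (1 / t))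
    (σ : ℝ → ℝ) (hσ_nonneg : ∀ t : ℝ, 0 ≤ t → 0 ≤ σ t)
    (hσ_left : ∀ t : ℝ, 0 ≤ t → σ (τ t) = t)
    (hσ_right : ∀ t : ℝ, 0 ≤ t → τ (σ t) = t) :
    ∀ E : Set (EuclideanSpace ℝ (Fin k)), MeasurableSet E → E ⊆ Ω → volume E < ∞ →
      ∃ C : ℝ≥0∞, C < ∞ ∧
        ∀ f : EuclideanSpace ℝ (Fin k) → ℝ, Measurable f →
          (∀ᵐ x ∂(volume.restrict Ω), 0 ≤ f x) →
          ∫⁻ x in E, ENNReal.ofReal (f x) ≤ C * rhoFn Ω σ f := by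
  intro E hE hEΩ hEfin
  -- basic facts about ψ, τ, σ
  have hψ0 : ψ 0 = 0 := hY.2.2.2.1
  have hψpos : ∀ x : ℝ, 0 < x → 0 < ψ x := by
    intro x hx
    have := hsm (Set.self_mem_Ici) (le_of_lt hx) hx
    linarith [hψ0 ▸ this]
  have hratio : ∀ x y : ℝ, 0 < x → x ≤ y → ψ x ≤ (x / y) * ψ y := by
    intro x y hx hxy
    have hy : 0 < y := lt_of_lt_of_le hx hxy
    have h1 : (0:ℝ) ≤ 1 - x / y := by
      rw [sub_nonneg]; exact (div_le_one hy).2 hxy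
    have h2 : (0:ℝ) ≤ x / y := le_of_lt (div_pos hx hy)
    have := hY.2.1.2 (Set.self_mem_Ici) (le_of_lt hy : y ∈ Set.Ici 0)
      h1 h2 (by ring)
    simp only [smul_eq_mul, mul_zero, zero_add, hψ0] at this
    have hxy' : (x / y) * y = x := div_mul_cancel₀ x (ne_of_gt hy)
    rw [hxy'] at this
    linarith
  have hτmono : StrictMonoOn τ (Set.Ici 0) := by
    intro s hs t ht hst
    have ht' : 0 < t := lt_of_le_of_lt hs hst
    have hτt : τ t = 1 / ψ (1 / t) := hτ t ht'
    have hψt : 0 < ψ (1 / t) := hψpos _ (by positivity)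
    rcases eq_or_lt_of_le (Set.mem_Ici.mp hs) with h | h
    · rw [← h, hτ0, hτt]; positivity
    · have hτs : τ s = 1 / ψ (1 / s) := hτ s h
      have hψs : 0 < ψ (1 / s) := hψpos _ (by positivity)
      rw [hτs, hτt]
      apply one_div_lt_one_div_of_lt hψt
      exact hsm (Set.mem_Ici.mpr (le_of_lt (by positivity : (0:ℝ) < 1/t)))
        (Set.mem_Ici.mpr (le_of_lt (by positivity : (0:ℝ) < 1/s))) (one_div_lt_one_div_of_lt h hst)
  have hσmono : ∀ s t : ℝ, 0 ≤ s → s ≤ t → σ s ≤ σ t := by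
    intro s t hs hst
    by_contra hcon
    push_neg at hcon
    have := hτmono (hσ_nonneg t (le_trans hs hst)) (hσ_nonneg s hs) hcon
    rw [hσ_right s hs, hσ_right t (le_trans hs hst)] at this
    linarith
  have hσpos : ∀ a : ℝ, 0 < a → 0 < σ a := by
    intro a ha
    rcases lt_or_eq_of_le (hσ_nonneg a (le_of_lt ha)) with h | h
    · exact h
    · exfalso
      have := hσ_right a (le_of_lt ha)
      rw [← h, hτ0] at this; linarith
  by_cases hE0 : volume E = 0
  · refine ⟨1, ENNReal.one_lt_top, fun f hf hf0 => ?_⟩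
    rw [setLIntegral_measure_zero E _ hE0]
    exact zero_le
  -- main case
  set A : ℝ := (volume E).toReal with hAdef
  have hA : 0 < A := ENNReal.toReal_pos hE0 (ne_of_lt hEfin)
  set U : ℝ := σ A with hUdef
  have hU : 0 < U := hσpos A hA
  -- key inequality
  have hkey : ∀ a : ℝ, 0 ≤ a → a ≤ A → a ≤ (A / U) * σ a := by
    intro a ha0 haA
    rcases eq_or_lt_of_le ha0 with h | h
    · rw [← h]
      exact mul_nonneg (le_of_lt (div_pos hA hU)) (hσ_nonneg 0 le_rfl)
    · set u : ℝ := σ a with hudef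
      have hu : 0 < u := hσpos a h
      have huU : u ≤ U := hσmono a A (le_of_lt h) haA
      have hτu : τ u = a := hσ_right a (le_of_lt h)
      have hτU : τ U = A := hσ_right A (le_of_lt hA)
      have ha : a = 1 / ψ (1 / u) := by rw [← hτu, hτ u hu]
      have hAe : A = 1 / ψ (1 / U) := by rw [← hτU, hτ U hU]
      have hψu : 0 < ψ (1 / u) := hψpos _ (by positivity)
      have hψU : 0 < ψ (1 / U) := hψpos _ (by positivity)
      -- ψ(1/U) ≤ ((1/U)/(1/u)) ψ(1/u) = (u/U) ψ(1/u)
      have hr := hratio (1 / U) (1 / u) (by positivity)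
        (one_div_le_one_div_of_le hu huU)
      have hr' : U * ψ (1 / U) ≤ u * ψ (1 / u) := by
        have h1 : (1 / U) / (1 / u) = u / U := by field_simp
        rw [h1] at hr
        have := mul_le_mul_of_nonneg_left hr (le_of_lt hU)
        rw [mul_comm (u / U) (ψ (1 / u)), ← mul_assoc] at this
        have h2 : U * (ψ (1 / u) * (u / U)) = u * ψ (1 / u) := by field_simp
        calc U * ψ (1/U) ≤ U * (ψ (1/u) * (u / U)) := by rw [← mul_assoc]; exact this
          _ = u * ψ (1/u) := h2
      -- a = 1/ψ(1/u) ≤ u/(U ψ(1/U)) = (A/U) u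
      have hgoal : (1:ℝ) / ψ (1 / u) ≤ u / (U * ψ (1 / U)) := by
        rw [div_le_div_iff₀ hψu (by positivity)]
        calc 1 * (U * ψ (1/U)) = U * ψ (1/U) := by ring
          _ ≤ u * ψ (1/u) := hr'
          _ = u * ψ (1/u) := rfl
      rw [ha, hAe]
      calc (1:ℝ) / ψ (1/u) ≤ u / (U * ψ (1/U)) := hgoal
        _ = (1 / ψ (1/U)) / U * u := by field_simp
  -- the constant
  refine ⟨ENNReal.ofReal (A / U), ENNReal.ofReal_lt_top, fun f hf hf0 => ?_⟩
  have hf0E : ∀ᵐ x ∂(volume.restrict E), 0 ≤ f x :=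
    ae_mono (Measure.restrict_mono hEΩ le_rfl) hf0
  rw [lintegral_eq_lintegral_meas_lt (volume.restrict E) hf0E hf.aemeasurable]
  have hpt : ∀ s : ℝ, (volume.restrict E) {x | s < f x}
      ≤ ENNReal.ofReal (A / U) * extInv σ (distribFn₀ Ω f s) := by
    intro s
    have hmeas : MeasurableSet {x | s < f x} := measurableSet_lt measurable_const hf
    rw [Measure.restrict_apply hmeas]
    set a : ℝ≥0∞ := volume ({x | s < f x} ∩ E) with hadef
    have haE : a ≤ volume E := measure_mono inter_subset_right
    have hafin : a < ∞ := lt_of_le_of_lt haE hEfin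
    have hab : a ≤ distribFn₀ Ω f s := by
      apply measure_mono
      intro x hx
      exact ⟨hEΩ hx.2, hx.1⟩
    by_cases hb : distribFn₀ Ω f s = ∞
    · rw [extInv, if_pos hb, ENNReal.mul_top]
      · exact le_top
      · simp only [ne_eq, ENNReal.ofReal_eq_zero, not_le]
        exact div_pos hA hU
    · rw [extInv, if_neg hb, ← ENNReal.ofReal_mul (le_of_lt (div_pos hA hU))]
      rw [← ENNReal.ofReal_toReal (ne_of_lt hafin)]
      apply ENNReal.ofReal_le_ofReal
      have ha0 : 0 ≤ a.toReal := ENNReal.toReal_nonneg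
      have haA : a.toReal ≤ A :=
        ENNReal.toReal_mono (ne_of_lt hEfin) haE
      have hab' : a.toReal ≤ (distribFn₀ Ω f s).toReal :=
        ENNReal.toReal_mono hb hab
      calc a.toReal ≤ (A / U) * σ a.toReal := hkey _ ha0 haA
        _ ≤ (A / U) * σ (distribFn₀ Ω f s).toReal := by
            apply mul_le_mul_of_nonneg_left _ (le_of_lt (div_pos hA hU))
            exact hσmono _ _ ha0 hab'
  calc ∫⁻ s in Set.Ioi (0:ℝ), (volume.restrict E) {x | s < f x}
      ≤ ∫⁻ s in Set.Ioi (0:ℝ), ENNReal.ofReal (A / U) * extInv σ (distribFn₀ Ω f s) :=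
        lintegral_mono fun s => hpt s
    _ = ENNReal.ofReal (A / U) * rhoFn Ω σ f := by
        rw [rhoFn, lintegral_const_mul' _ _ ENNReal.ofReal_ne_top]
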